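/- Let H₀ and H₁ be complex Hilbert spaces, let T₀ and T₁ be bounded operators on H₀ and H₁ respectively whose spectra are contained in the closed unit disc, and let X : H₁ → H₀ be a bounded linear operator. Suppose that for every φ ∈ Möb there exist unitary operators U_φ on H₀ and V_φ on H₁ such that φ(T₀) = U_φ*T₀U_φ, φ(T₁) = V_φ*T₁V_φ, and X V_φ = U_φ X. Then the bounded operator T on H₀ ⊕ H₁ defined in block form by T(x, y) = (T₀x + (XT₁ − T₀X)y, T₁y) is homogeneous. -/

import Mathlib

noncomputable section

open Complex Metric
/-- The block operator `(x, y) ↦ (T₀ x + (X T₁ − T₀ X) y, T₁ y)` on the Hilbert space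
direct sum `H₀ ⊕ H₁`. -/
def blockT2 {H0 H1 : Type*} [NormedAddCommGroup H0] [NormedSpace ℂ H0]
    [NormedAddCommGroup H1] [NormedSpace ℂ H1]
    (T0 : H0 →L[ℂ] H0) (T1 : H1 →L[ℂ] H1) (X : H1 →L[ℂ] H0) :
    WithLp 2 (H0 × H1) →L[ℂ] WithLp 2 (H0 × H1) :=
  let E := WithLp.prodContinuousLinearEquiv 2 ℂ H0 H1
  (E.symm.toContinuousLinearMap).comp
    ((((T0.comp (ContinuousLinearMap.fst ℂ H0 H1)) +
        ((X.comp T1 - T0.comp X).comp (ContinuousLinearMap.snd ℂ H0 H1))).prod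
      (T1.comp (ContinuousLinearMap.snd ℂ H0 H1))).comp E.toContinuousLinearMap)
/-- The action of the Möbius map `z ↦ e^{iθ}(z − a)/(1 − conj(a) z)` on an operator:
`φ(A) = e^{iθ}(A − a)(I − conj(a)A)⁻¹`. -/
def mobiusOp {E : Type*} [NormedAddCommGroup E] [NormedSpace ℂ E]
    (θ : ℝ) (a : ℂ) (A : E →L[ℂ] E) : E →L[ℂ] E :=
  Complex.exp (θ * Complex.I) •
    ((A - a • (1 : E →L[ℂ] E)) * Ring.inverse (1 - (starRingEnd ℂ) a • A))

/-- Two bounded operators are similar if they are intertwined by a bounded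
invertible operator. -/
def SimilarOp {E : Type*} [NormedAddCommGroup E] [NormedSpace ℂ E]
    (A B : E →L[ℂ] E) : Prop :=
  ∃ S : (E →L[ℂ] E)ˣ, (S : E →L[ℂ] E) * A = B * (S : E →L[ℂ] E)

/-- A bounded operator is weakly homogeneous if its spectrum is contained in the closed
unit disc and `φ(A)` is similar to `A` for every Möbius map `φ`. -/
def WeaklyHomogeneousOp {E : Type*} [NormedAddCommGroup E] [NormedSpace ℂ E]
    (A : E →L[ℂ] E) : Prop :=
  spectrum ℂ A ⊆ closedBall (0 : ℂ) 1 ∧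
    ∀ (θ : ℝ) (a : ℂ), ‖a‖ < 1 → SimilarOp (mobiusOp θ a A) A
/-- A bounded operator on a Hilbert space is homogeneous if its spectrum is contained in
the closed unit disc and `φ(A)` is unitarily equivalent to `A` for every Möbius map `φ`. -/
def HomogeneousOp {E : Type*} [NormedAddCommGroup E] [InnerProductSpace ℂ E] [CompleteSpace E]
    (A : E →L[ℂ] E) : Prop :=
  spectrum ℂ A ⊆ closedBall (0 : ℂ) 1 ∧
    ∀ (θ : ℝ) (a : ℂ), ‖a‖ < 1 →
      ∃ U ∈ unitary (E →L[ℂ] E), mobiusOp θ a A = star U * A * U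

/-- A bounded operator is strongly irreducible if the only bounded idempotents commuting
with it are `0` and `1`. -/
def StronglyIrreducibleOp {E : Type*} [NormedAddCommGroup E] [NormedSpace ℂ E]
    (A : E →L[ℂ] E) : Prop :=
  ∀ P : E →L[ℂ] E, P * P = P → A * P = P * A → P = 0 ∨ P = 1

/-- The Cowen–Douglas class `B_n(𝔻)`: `𝔻 ⊆ σ(A)`, `A − w` is surjective with
`n`-dimensional kernel for all `w ∈ 𝔻`, and the kernels span a dense subspace. -/
def CowenDouglasDisc {E : Type*} [NormedAddCommGroup E] [NormedSpace ℂ E]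
    (n : ℕ) (A : E →L[ℂ] E) : Prop :=
  ball (0 : ℂ) 1 ⊆ spectrum ℂ A ∧
  (∀ w ∈ ball (0 : ℂ) 1, Function.Surjective (A - w • (1 : E →L[ℂ] E))) ∧
  (∀ w ∈ ball (0 : ℂ) 1,
    Module.finrank ℂ (LinearMap.ker ((A - w • (1 : E →L[ℂ] E)) : E →ₗ[ℂ] E)) = n) ∧
  (⨆ w ∈ ball (0 : ℂ) 1,
    LinearMap.ker ((A - w • (1 : E →L[ℂ] E)) : E →ₗ[ℂ] E)).topologicalClosure = ⊤
namespace BlockHomogAux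

theorem ring_inverse_conj {R : Type*} [Ring R] {G G' : R} (hGG' : G * G' = 1)
    (hG'G : G' * G = 1) (x : R) :
    Ring.inverse (G * x * G') = G * Ring.inverse x * G' := by
  by_cases h : IsUnit x
  · obtain ⟨u, rfl⟩ := h
    have h2 : IsUnit (G * ↑u * G') := by
      refine ⟨⟨G * ↑u * G', G * ↑u⁻¹ * G', ?_, ?_⟩, rfl⟩
      · calc G * ↑u * G' * (G * ↑u⁻¹ * G') = G * ↑u * (G' * G) * ↑u⁻¹ * G' := by
              simp [mul_assoc]
          _ = 1 := by simp [hG'G, hGG', mul_assoc]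
      · calc G * ↑u⁻¹ * G' * (G * ↑u * G') = G * ↑u⁻¹ * (G' * G) * ↑u * G' := by
              simp [mul_assoc]
          _ = 1 := by simp [hG'G, hGG', mul_assoc]
    obtain ⟨w, hw⟩ := h2
    rw [← hw, Ring.inverse_unit, Ring.inverse_unit]
    have : (↑w⁻¹ : R) = G * ↑u⁻¹ * G' := by
      apply Units.inv_eq_of_mul_eq_one_right
      rw [hw]
      calc G * ↑u * G' * (G * ↑u⁻¹ * G') = G * ↑u * (G' * G) * ↑u⁻¹ * G' := by
            simp [mul_assoc]
        _ = 1 := by simp [hG'G, hGG', mul_assoc]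
    rw [this]
  · rw [Ring.inverse_non_unit _ h, Ring.inverse_non_unit, mul_zero, zero_mul]
    intro hu
    apply h
    have h3 : x = G' * (G * x * G') * G := by
      calc x = 1 * x * 1 := by simp
        _ = (G' * G) * x * (G' * G) := by rw [hG'G]
        _ = G' * (G * x * G') * G := by simp [mul_assoc]
    rw [h3]
    refine IsUnit.mul (IsUnit.mul ?_ hu) ?_
    · exact ⟨⟨G', G, hG'G, hGG'⟩, rfl⟩
    · exact ⟨⟨G, G', hGG', hG'G⟩, rfl⟩

theorem mobius_conj {E : Type*} [NormedAddCommGroup E] [NormedSpace ℂ E]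
    (θ : ℝ) (a : ℂ) {G G' : E →L[ℂ] E} (hGG' : G * G' = 1) (hG'G : G' * G = 1)
    (A : E →L[ℂ] E) :
    mobiusOp θ a (G * A * G') = G * mobiusOp θ a A * G' := by
  unfold mobiusOp
  have hconst : ∀ c : ℂ, G * (c • 1) * G' = c • 1 := by
    intro c
    rw [mul_smul_comm, mul_one, smul_mul_assoc, hGG']
  have h1 : G * A * G' - a • 1 = G * (A - a • 1) * G' := by
    rw [mul_sub, sub_mul, hconst]
  have h2 : 1 - (starRingEnd ℂ) a • (G * A * G') =
      G * (1 - (starRingEnd ℂ) a • A) * G' := by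
    rw [mul_sub, sub_mul, mul_one, hGG']
    congr 1
    rw [mul_smul_comm, smul_mul_assoc]
  rw [h1, h2, ring_inverse_conj hGG' hG'G]
  have h3 : G * (A - a • 1) * G' *
      (G * Ring.inverse (1 - (starRingEnd ℂ) a • A) * G') =
      G * ((A - a • 1) * Ring.inverse (1 - (starRingEnd ℂ) a • A)) * G' := by
    calc G * (A - a • 1) * G' * (G * Ring.inverse (1 - (starRingEnd ℂ) a • A) * G')
        = G * (A - a • 1) * (G' * G) * Ring.inverse (1 - (starRingEnd ℂ) a • A) * G' := by
          simp [mul_assoc]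
      _ = _ := by rw [hG'G]; simp [mul_assoc]
  rw [h3, mul_smul_comm, smul_mul_assoc]
theorem isUnit_one_sub_conj_smul {E : Type*} [NormedAddCommGroup E] [NormedSpace ℂ E]
    [CompleteSpace E] (T : E →L[ℂ] E) (hσ : spectrum ℂ T ⊆ Metric.closedBall (0 : ℂ) 1)
    (a : ℂ) (ha : ‖a‖ < 1) : IsUnit (1 - (starRingEnd ℂ) a • T) := by
  set b := (starRingEnd ℂ) a with hb
  by_cases hb0 : b = 0
  · simp [hb0]
  · have hbn : ‖b‖ < 1 := by simpa [hb] using ha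
    have hbpos : (0:ℝ) < ‖b‖ := norm_pos_iff.mpr hb0
    have hmem : (b⁻¹ : ℂ) ∉ spectrum ℂ T := by
      intro hmem
      have h2 := hσ hmem
      rw [Metric.mem_closedBall, dist_zero_right, norm_inv] at h2
      have h1 : ‖b‖ * ‖b‖⁻¹ = 1 := mul_inv_cancel₀ (ne_of_gt hbpos)
      nlinarith
    rw [spectrum.notMem_iff] at hmem
    have key : (1 : E →L[ℂ] E) - b • T = b • (algebraMap ℂ (E →L[ℂ] E) b⁻¹ - T) := by
      rw [Algebra.algebraMap_eq_smul_one, smul_sub, smul_smul, mul_inv_cancel₀ hb0, one_smul]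
    rw [key]
    exact IsUnit.smul (Units.mk0 b hb0) hmem

variable {H0 H1 : Type*} [NormedAddCommGroup H0] [NormedSpace ℂ H0]
    [NormedAddCommGroup H1] [NormedSpace ℂ H1]

/-- general upper-triangular block operator -/
def blk (A : H0 →L[ℂ] H0) (B : H1 →L[ℂ] H1) (C : H1 →L[ℂ] H0) :
    WithLp 2 (H0 × H1) →L[ℂ] WithLp 2 (H0 × H1) :=
  let E := WithLp.prodContinuousLinearEquiv 2 ℂ H0 H1
  (E.symm.toContinuousLinearMap).comp
    ((((A.comp (ContinuousLinearMap.fst ℂ H0 H1)) +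
        (C.comp (ContinuousLinearMap.snd ℂ H0 H1))).prod
      (B.comp (ContinuousLinearMap.snd ℂ H0 H1))).comp E.toContinuousLinearMap)

theorem blk_apply_fst (A : H0 →L[ℂ] H0) (B : H1 →L[ℂ] H1) (C : H1 →L[ℂ] H0)
    (v : WithLp 2 (H0 × H1)) : (blk A B C v).fst = A v.fst + C v.snd := rfl

theorem blk_apply_snd (A : H0 →L[ℂ] H0) (B : H1 →L[ℂ] H1) (C : H1 →L[ℂ] H0)
    (v : WithLp 2 (H0 × H1)) : (blk A B C v).snd = B v.snd := rfl

theorem blk_ext {S T : WithLp 2 (H0 × H1) →L[ℂ] WithLp 2 (H0 × H1)}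
    (h : ∀ v : WithLp 2 (H0 × H1), ((S v).fst = (T v).fst ∧ (S v).snd = (T v).snd)) :
    S = T := by
  ext v
  apply WithLp.ofLp_injective
  exact Prod.ext (h v).1 (h v).2

theorem blk_mul (A A' : H0 →L[ℂ] H0) (B B' : H1 →L[ℂ] H1) (C C' : H1 →L[ℂ] H0) :
    blk A B C * blk A' B' C' = blk (A * A') (B * B') (A.comp C' + C.comp B') := by
  apply blk_ext
  intro v
  constructor
  · show (blk A B C (blk A' B' C' v)).fst = _
    rw [blk_apply_fst, blk_apply_fst, blk_apply_snd, blk_apply_fst, map_add]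
    simp only [ContinuousLinearMap.add_apply, ContinuousLinearMap.coe_comp',
      Function.comp_apply, ContinuousLinearMap.mul_apply]
    abel
  · show (blk A B C (blk A' B' C' v)).snd = _
    rw [blk_apply_snd, blk_apply_snd, blk_apply_snd]
    rfl

theorem blk_one : (blk 1 1 0 : WithLp 2 (H0 × H1) →L[ℂ] _) = 1 := by
  apply blk_ext
  intro v
  simp [blk_apply_fst, blk_apply_snd]

theorem blk_smul (c : ℂ) (A : H0 →L[ℂ] H0) (B : H1 →L[ℂ] H1) (C : H1 →L[ℂ] H0) :
    c • blk A B C = blk (c • A) (c • B) (c • C) := by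
  apply blk_ext
  intro v
  constructor
  · show c • (blk A B C v).fst = _
    simp [blk_apply_fst]
  · show c • (blk A B C v).snd = _
    simp [blk_apply_snd]

theorem blk_sub (A A' : H0 →L[ℂ] H0) (B B' : H1 →L[ℂ] H1) (C C' : H1 →L[ℂ] H0) :
    blk A B C - blk A' B' C' = blk (A - A') (B - B') (C - C') := by
  apply blk_ext
  intro v
  constructor
  · show (blk A B C v).fst - (blk A' B' C' v).fst = _
    simp [blk_apply_fst]
    abel
  · show (blk A B C v).snd - (blk A' B' C' v).snd = _
    simp [blk_apply_snd]

theorem blk_mul_diag (A A' : H0 →L[ℂ] H0) (B B' : H1 →L[ℂ] H1) :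
    blk A B 0 * blk A' B' 0 = blk (A * A') (B * B') 0 := by
  rw [blk_mul]
  simp

/-- block diagonal of two units is a unit -/
def blkUnit (u0 : (H0 →L[ℂ] H0)ˣ) (u1 : (H1 →L[ℂ] H1)ˣ) :
    (WithLp 2 (H0 × H1) →L[ℂ] WithLp 2 (H0 × H1))ˣ where
  val := blk ↑u0 ↑u1 0
  inv := blk ↑u0⁻¹ ↑u1⁻¹ 0
  val_inv := by rw [blk_mul_diag]; simp [blk_one]
  inv_val := by rw [blk_mul_diag]; simp [blk_one]

theorem ring_inverse_blk_diag {A : H0 →L[ℂ] H0} {B : H1 →L[ℂ] H1}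
    (hA : IsUnit A) (hB : IsUnit B) :
    Ring.inverse (blk A B 0) = blk (Ring.inverse A) (Ring.inverse B) 0 := by
  obtain ⟨u0, rfl⟩ := hA
  obtain ⟨u1, rfl⟩ := hB
  have h : blk (↑u0 : H0 →L[ℂ] H0) (↑u1 : H1 →L[ℂ] H1) 0 = ↑(blkUnit u0 u1) := rfl
  rw [h, Ring.inverse_unit, Ring.inverse_unit, Ring.inverse_unit]
  rfl

theorem mobius_blk_diag (θ : ℝ) (a : ℂ) (T0 : H0 →L[ℂ] H0) (T1 : H1 →L[ℂ] H1)
    (h0 : IsUnit (1 - (starRingEnd ℂ) a • T0)) (h1 : IsUnit (1 - (starRingEnd ℂ) a • T1)) :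
    mobiusOp θ a (blk T0 T1 0) = blk (mobiusOp θ a T0) (mobiusOp θ a T1) 0 := by
  unfold mobiusOp
  have e1 : blk T0 T1 0 - a • 1 = blk (T0 - a • 1) (T1 - a • 1) 0 := by
    rw [← blk_one, blk_smul, blk_sub]
    simp
  have e2 : (1 : WithLp 2 (H0 × H1) →L[ℂ] _) - (starRingEnd ℂ) a • blk T0 T1 0 =
      blk (1 - (starRingEnd ℂ) a • T0) (1 - (starRingEnd ℂ) a • T1) 0 := by
    rw [← blk_one (H0 := H0) (H1 := H1), blk_smul, blk_sub]
    simp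
  rw [e1, e2, ring_inverse_blk_diag h0 h1, blk_mul_diag, blk_smul, smul_zero]


section Hilbert
variable {K0 K1 : Type*} [NormedAddCommGroup K0] [InnerProductSpace ℂ K0] [CompleteSpace K0]
    [NormedAddCommGroup K1] [InnerProductSpace ℂ K1] [CompleteSpace K1]

theorem blk_star (A : K0 →L[ℂ] K0) (B : K1 →L[ℂ] K1) :
    star (blk A B 0) = blk (star A) (star B) 0 := by
  rw [ContinuousLinearMap.star_eq_adjoint]
  symm
  rw [ContinuousLinearMap.eq_adjoint_iff]
  intro x y
  rw [WithLp.prod_inner_apply, WithLp.prod_inner_apply]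
  simp only [WithLp.ofLp_fst, WithLp.ofLp_snd, blk_apply_fst, blk_apply_snd]
  simp [ContinuousLinearMap.star_eq_adjoint, ContinuousLinearMap.adjoint_inner_left]

end Hilbert

end BlockHomogAux


/-- If `T₀` and `T₁` are homogeneous with unitary representations `U_φ`, `V_φ`
intertwined by `X` (i.e. `X V_φ = U_φ X`), then the block operator
`T = [[T₀, XT₁ − T₀X], [0, T₁]]` is homogeneous. -/
theorem homogeneous_blockT_of_intertwining_representations
    {H0 H1 : Type*} [NormedAddCommGroup H0] [InnerProductSpace ℂ H0] [CompleteSpace H0]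
    [NormedAddCommGroup H1] [InnerProductSpace ℂ H1] [CompleteSpace H1]
    (T0 : H0 →L[ℂ] H0) (T1 : H1 →L[ℂ] H1) (X : H1 →L[ℂ] H0)
    (hσ0 : spectrum ℂ T0 ⊆ closedBall (0 : ℂ) 1)
    (hσ1 : spectrum ℂ T1 ⊆ closedBall (0 : ℂ) 1)
    (hrep : ∀ (θ : ℝ) (a : ℂ), ‖a‖ < 1 →
      ∃ U ∈ unitary (H0 →L[ℂ] H0), ∃ V ∈ unitary (H1 →L[ℂ] H1),
        mobiusOp θ a T0 = star U * T0 * U ∧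
        mobiusOp θ a T1 = star V * T1 * V ∧
        X.comp V = U.comp X) :
    HomogeneousOp (blockT2 T0 T1 X) := by
  classical
  set R := WithLp 2 (H0 × H1) →L[ℂ] WithLp 2 (H0 × H1) with hR
  set S : R := BlockHomogAux.blk (1 : H0 →L[ℂ] H0) 1 X with hS
  set S' : R := BlockHomogAux.blk (1 : H0 →L[ℂ] H0) 1 (-X) with hS'
  have hSS' : S * S' = 1 := by
    rw [hS, hS', BlockHomogAux.blk_mul]
    simp only [one_mul, ContinuousLinearMap.comp_zero, ContinuousLinearMap.zero_comp]
    have h1 : (1 : H0 →L[ℂ] H0).comp (-X) + X.comp (1 : H1 →L[ℂ] H1) = 0 := by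
      ext v; simp
    rw [h1, BlockHomogAux.blk_one]
  have hS'S : S' * S = 1 := by
    rw [hS, hS', BlockHomogAux.blk_mul]
    simp only [one_mul]
    have h1 : (1 : H0 →L[ℂ] H0).comp X + (-X).comp (1 : H1 →L[ℂ] H1) = 0 := by
      ext v; simp
    rw [h1, BlockHomogAux.blk_one]
  set D : R := BlockHomogAux.blk T0 T1 0 with hD
  have hT : blockT2 T0 T1 X = S * D * S' := by
    have h0 : blockT2 T0 T1 X = BlockHomogAux.blk T0 T1 (X.comp T1 - T0.comp X) := rfl
    rw [h0, hS, hD, hS', BlockHomogAux.blk_mul, BlockHomogAux.blk_mul]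
    congr 1
    ext v
    simp [sub_eq_neg_add, ContinuousLinearMap.one_apply]
  have hSunit : IsUnit S := ⟨⟨S, S', hSS', hS'S⟩, rfl⟩
  have hS'unit : IsUnit S' := ⟨⟨S', S, hS'S, hSS'⟩, rfl⟩
  constructor
  · -- spectrum inclusion
    intro z hz
    by_contra hball
    have h0 : z ∉ spectrum ℂ T0 := fun h => hball (hσ0 h)
    have h1 : z ∉ spectrum ℂ T1 := fun h => hball (hσ1 h)
    rw [spectrum.notMem_iff] at h0 h1
    obtain ⟨u0, hu0⟩ := h0
    obtain ⟨u1, hu1⟩ := h1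
    have hnot : z ∉ spectrum ℂ (blockT2 T0 T1 X) := by
      rw [spectrum.notMem_iff]
      have e : algebraMap ℂ R z - blockT2 T0 T1 X =
          S * (BlockHomogAux.blk (algebraMap ℂ (H0 →L[ℂ] H0) z - T0)
            (algebraMap ℂ (H1 →L[ℂ] H1) z - T1) 0) * S' := by
        have hzS : (algebraMap ℂ R z) = S * (algebraMap ℂ R z) * S' := by
          rw [Algebra.algebraMap_eq_smul_one, mul_smul_comm, mul_one, smul_mul_assoc, hSS']
        rw [hT]
        nth_rewrite 1 [hzS]
        rw [← sub_mul, ← mul_sub]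
        congr 2
        rw [hD, Algebra.algebraMap_eq_smul_one, Algebra.algebraMap_eq_smul_one,
          Algebra.algebraMap_eq_smul_one, ← BlockHomogAux.blk_one (H0 := H0) (H1 := H1),
          BlockHomogAux.blk_smul, BlockHomogAux.blk_sub]
        simp
      rw [e]
      have hmid : IsUnit (BlockHomogAux.blk (algebraMap ℂ (H0 →L[ℂ] H0) z - T0)
          (algebraMap ℂ (H1 →L[ℂ] H1) z - T1) 0) := by
        rw [← hu0, ← hu1]
        exact (BlockHomogAux.blkUnit u0 u1).isUnit
      exact (hSunit.mul hmid).mul hS'unit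
    exact hnot hz
  · intro θ a ha
    obtain ⟨U, hU, V, hV, hT0m, hT1m, hXVU⟩ := hrep θ a ha
    rw [Unitary.mem_iff] at hU hV
    have hXV' : X.comp (star V) = (star U).comp X := by
      ext x
      show X ((star V) x) = (star U) (X x)
      have h1 : V ((star V) x) = x := by
        have h := congrFun (congrArg (DFunLike.coe) hV.2) x
        simpa [ContinuousLinearMap.mul_apply] using h
      have h2 : X x = U (X ((star V) x)) := by
        have h := congrFun (congrArg (DFunLike.coe) hXVU) ((star V) x)
        simp only [ContinuousLinearMap.coe_comp', Function.comp_apply] at h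
        rw [h1] at h
        exact h
      have h3 : (star U) (U (X ((star V) x))) = X ((star V) x) := by
        have h := congrFun (congrArg (DFunLike.coe) hU.1) (X ((star V) x))
        simpa [ContinuousLinearMap.mul_apply] using h
      rw [h2, h3]
    set W : R := BlockHomogAux.blk U V 0 with hW
    have hWstar : star W = BlockHomogAux.blk (star U) (star V) 0 := by
      rw [hW, BlockHomogAux.blk_star]
    have hWun : W ∈ unitary R := by
      rw [Unitary.mem_iff, hWstar, hW, BlockHomogAux.blk_mul_diag,
        BlockHomogAux.blk_mul_diag, hU.1, hV.1, hU.2, hV.2, BlockHomogAux.blk_one]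
      exact ⟨rfl, rfl⟩
    refine ⟨W, hWun, ?_⟩
    have hmobD : mobiusOp θ a D = BlockHomogAux.blk (mobiusOp θ a T0) (mobiusOp θ a T1) 0 :=
      BlockHomogAux.mobius_blk_diag θ a T0 T1
        (BlockHomogAux.isUnit_one_sub_conj_smul T0 hσ0 a ha)
        (BlockHomogAux.isUnit_one_sub_conj_smul T1 hσ1 a ha)
    have hcomm2 : S * star W = star W * S := by
      rw [hS, hWstar, BlockHomogAux.blk_mul, BlockHomogAux.blk_mul]
      congr 1
      simp [hXV']
    have hcomm1' : W * S' = S' * W := by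
      rw [hS', hW, BlockHomogAux.blk_mul, BlockHomogAux.blk_mul]
      congr 1
      simp [hXVU]
    calc mobiusOp θ a (blockT2 T0 T1 X)
        = mobiusOp θ a (S * D * S') := by rw [hT]
      _ = S * mobiusOp θ a D * S' := BlockHomogAux.mobius_conj θ a hSS' hS'S D
      _ = S * (BlockHomogAux.blk (mobiusOp θ a T0) (mobiusOp θ a T1) 0) * S' := by
          rw [hmobD]
      _ = S * (star W * D * W) * S' := by
          rw [hT0m, hT1m, hWstar, hW, hD, BlockHomogAux.blk_mul_diag,
            BlockHomogAux.blk_mul_diag]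
      _ = (S * star W) * D * (W * S') := by
          simp only [mul_assoc]
      _ = (star W * S) * D * (S' * W) := by rw [hcomm2, hcomm1']
      _ = star W * (S * D * S') * W := by
          simp only [mul_assoc]
      _ = star W * blockT2 T0 T1 X * W := by rw [← hT]
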